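/- Given the smooth-fit system −γn₀A·x^{n₀} − A_y·x^{n₀} + x − Cˢ = 0 and −γn₀²A·x^{n₀−1} − n₀A_y·x^{n₀−1} + 1 = 0 both evaluated at x = F, the unique solution has constant free boundary F = n₀Cˢ/(n₀−1), and A satisfying γn₀A + A_y = ((n₀−1)/(n₀Cˢ))^{n₀−1}/n₀; with A(0) = 0 this gives A(y) = (1/(γn₀²))((n₀−1)/(n₀Cˢ))^{n₀−1}(1 − e^{−γn₀y}). -/

import Mathlib

/-- The smooth-fit system
−γn₀A(y)F(y)^{n₀} − A'(y)F(y)^{n₀} + F(y) − Cˢ = 0 and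
−γn₀²A(y)F(y)^{n₀−1} − n₀A'(y)F(y)^{n₀−1} + 1 = 0, together with A(0) = 0,
forces the constant free boundary F ≡ n₀Cˢ/(n₀−1), the ODE
γn₀A + A' = ((n₀−1)/(n₀Cˢ))^{n₀−1}/n₀, and
A(y) = (1/(γn₀²))((n₀−1)/(n₀Cˢ))^{n₀−1}(1 − e^{−γn₀y}). -/
theorem stmt_18 (γ Cs n₀ : ℝ) (hγ : 0 < γ) (hCs : 0 < Cs) (hn₀ : 1 < n₀)
    (A F : ℝ → ℝ) (hA : Differentiable ℝ A) (hF : ∀ y : ℝ, 0 < F y) (hA0 : A 0 = 0)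
    (heq1 : ∀ y : ℝ,
      -(γ * n₀) * A y * F y ^ (n₀ : ℝ) - deriv A y * F y ^ (n₀ : ℝ) + F y - Cs = 0)
    (heq2 : ∀ y : ℝ,
      -(γ * n₀^2) * A y * F y ^ (n₀ - 1) - n₀ * deriv A y * F y ^ (n₀ - 1) + 1 = 0) :
    ∀ y : ℝ,
      F y = n₀ * Cs / (n₀ - 1) ∧
      γ * n₀ * A y + deriv A y = ((n₀ - 1) / (n₀ * Cs)) ^ (n₀ - 1) / n₀ ∧
      A y = 1 / (γ * n₀^2) * ((n₀ - 1) / (n₀ * Cs)) ^ (n₀ - 1) *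
        (1 - Real.exp (-(γ * n₀ * y))) := by
  have hn1 : (0:ℝ) < n₀ - 1 := by linarith
  have hn0 : (0:ℝ) < n₀ := by linarith
  set c : ℝ := ((n₀ - 1) / (n₀ * Cs)) ^ (n₀ - 1) with hc
  -- per-y facts
  have hkey : ∀ y : ℝ, F y = n₀ * Cs / (n₀ - 1) ∧
      γ * n₀ * A y + deriv A y = c / n₀ := by
    intro y
    have hFpos := hF y
    have h1 := heq1 y
    have h2 := heq2 y
    have hsplit : F y ^ (n₀ : ℝ) = F y ^ (n₀ - 1) * F y := by
      have h := Real.rpow_add hFpos (n₀ - 1) 1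
      rw [Real.rpow_one, sub_add_cancel] at h
      exact h
    set P := F y ^ (n₀ - 1) with hP
    have hPpos : 0 < P := Real.rpow_pos_of_pos hFpos _
    set Q := γ * n₀ * A y + deriv A y with hQ
    have key1 : Q * (P * F y) = F y - Cs := by
      rw [hsplit] at h1; ring_nf; ring_nf at h1; linarith
    have key2 : n₀ * (Q * P) = 1 := by
      ring_nf; ring_nf at h2; linarith
    have key3 : n₀ * (F y - Cs) = F y := by
      linear_combination F y * key2 - n₀ * key1
    have hFy : F y = n₀ * Cs / (n₀ - 1) := by
      field_simp
      linarith
    have hcP : c * P = 1 := by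
      have hinv : (n₀ - 1) / (n₀ * Cs) = (F y)⁻¹ := by
        rw [hFy]; field_simp
      rw [hc, hinv, ← Real.rpow_neg_one (F y), ← Real.rpow_mul hFpos.le, hP,
        ← Real.rpow_add hFpos]
      have h5 : (-1) * (n₀ - 1) + (n₀ - 1) = 0 := by ring
      rw [h5, Real.rpow_zero]
    have hQc : Q = c / n₀ := by
      have hPne : P ≠ 0 := ne_of_gt hPpos
      have : n₀ * Q * P = c * P := by rw [hcP]; linarith [key2]
      have h4 : n₀ * Q = c := by
        field_simp at this
        linarith
      field_simp
      linarith
    exact ⟨hFy, hQc⟩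
  -- the ODE solution
  have hODE : ∀ y : ℝ, γ * n₀ * A y + deriv A y = c / n₀ := fun y => (hkey y).2
  have hExp : ∀ y : ℝ, HasDerivAt (fun t => Real.exp (γ * n₀ * t))
      (γ * n₀ * Real.exp (γ * n₀ * y)) y := by
    intro y
    have h1 : HasDerivAt (fun t : ℝ => γ * n₀ * t) (γ * n₀) y := by
      simpa using (hasDerivAt_id y).const_mul (γ * n₀)
    have h2 := h1.exp
    convert h2 using 1
    ring
  set g : ℝ → ℝ := fun y => A y * Real.exp (γ * n₀ * y)
      - c / (γ * n₀ ^ 2) * (Real.exp (γ * n₀ * y) - 1) with hg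
  have hγn : γ * n₀ ≠ 0 := by positivity
  have hgd : ∀ y : ℝ, HasDerivAt g 0 y := by
    intro y
    have h1 : HasDerivAt (fun t => A t * Real.exp (γ * n₀ * t))
        (deriv A y * Real.exp (γ * n₀ * y) + A y * (γ * n₀ * Real.exp (γ * n₀ * y))) y :=
      ((hA y).hasDerivAt).mul (hExp y)
    have h2 : HasDerivAt (fun t => c / (γ * n₀ ^ 2) * (Real.exp (γ * n₀ * t) - 1))
        (c / (γ * n₀ ^ 2) * (γ * n₀ * Real.exp (γ * n₀ * y))) y :=
      (((hExp y).sub_const 1).const_mul _)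
    have h3 := h1.sub h2
    have heq : deriv A y * Real.exp (γ * n₀ * y) + A y * (γ * n₀ * Real.exp (γ * n₀ * y))
        - c / (γ * n₀ ^ 2) * (γ * n₀ * Real.exp (γ * n₀ * y)) = 0 := by
      have hγ0 : γ ≠ 0 := ne_of_gt hγ
      have hn0' : n₀ ≠ 0 := by positivity
      have hder : deriv A y = c / n₀ - γ * n₀ * A y := by linarith [hODE y]
      have hsim : c / (γ * n₀ ^ 2) * (γ * n₀ * Real.exp (γ * n₀ * y))
          = c / n₀ * Real.exp (γ * n₀ * y) := by
        field_simp
      rw [hsim, hder]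
      ring
    rw [← heq]
    exact h3
  have hgconst : ∀ y : ℝ, g y = g 0 := fun y =>
    is_const_of_deriv_eq_zero (fun t => (hgd t).differentiableAt)
      (fun t => (hgd t).deriv) y 0
  have hAy : ∀ y : ℝ, A y = 1 / (γ * n₀ ^ 2) * c * (1 - Real.exp (-(γ * n₀ * y))) := by
    intro y
    have h0 : g 0 = 0 := by simp [hg, hA0]
    have h1 : g y = 0 := (hgconst y).trans h0
    have hE : Real.exp (γ * n₀ * y) ≠ 0 := Real.exp_ne_zero _
    have hEn : Real.exp (-(γ * n₀ * y)) = (Real.exp (γ * n₀ * y))⁻¹ := by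
      rw [Real.exp_neg]
    rw [hEn]
    rw [hg] at h1
    have hγ0 : γ ≠ 0 := ne_of_gt hγ
    have hn0' : n₀ ≠ 0 := by positivity
    field_simp at h1 ⊢
    nlinarith [h1]
  intro y
  exact ⟨(hkey y).1, (hkey y).2, hAy y⟩
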